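/- If W is conditionally independent of Y given (Z, X), then there exists a function φ of (X, Z) taking values in a scalar space such that W is conditionally independent of Y given (φ(X,Z), X). In particular, for discrete random variables one may take φ(x,z) = P(Y = 1 | X = x, Z = z) when Y is binary. -/
import Mathlib


open Finset

attribute [local instance] Classical.propDecidable

/-- Probability of an event on a finite outcome space. -/
noncomputable def Pr {Ω : Type*} [Fintype Ω] (p : Ω → ℝ) (E : Ω → Prop) : ℝ :=
  ∑ ω, if E ω then p ω else 0

/-- Conditional probability `P(E | F)`. -/
noncomputable def condPr {Ω : Type*} [Fintype Ω] (p : Ω → ℝ) (E F : Ω → Prop) : ℝ :=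
  Pr p (fun ω => E ω ∧ F ω) / Pr p F

/-- Conditional independence of `A` and `B` given `S`, via factorization of the joint law. -/
def CondIndepOn {Ω α β γ : Type*} [Fintype Ω] (p : Ω → ℝ)
    (A : Ω → α) (B : Ω → β) (S : Ω → γ) : Prop :=
  ∀ a b s,
    Pr p (fun ω => A ω = a ∧ B ω = b ∧ S ω = s) * Pr p (fun ω => S ω = s) =
    Pr p (fun ω => A ω = a ∧ S ω = s) * Pr p (fun ω => B ω = b ∧ S ω = s)

lemma Pr_congr' {Ω : Type*} [Fintype Ω] (p : Ω → ℝ) {E F : Ω → Prop}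
    (h : ∀ ω, E ω ↔ F ω) : Pr p E = Pr p F :=
  Finset.sum_congr rfl fun ω _ => if_congr (h ω) rfl rfl

lemma Pr_le' {Ω : Type*} [Fintype Ω] (p : Ω → ℝ) (hp : ∀ ω, 0 ≤ p ω) {E F : Ω → Prop}
    (hEF : ∀ ω, E ω → F ω) : Pr p E ≤ Pr p F := by
  unfold Pr
  apply Finset.sum_le_sum
  intro ω _
  by_cases hE : E ω
  · rw [if_pos hE, if_pos (hEF ω hE)]
  · rw [if_neg hE]
    by_cases hF : F ω <;> simp [hF, hp ω]

lemma Pr_nonneg' {Ω : Type*} [Fintype Ω] (p : Ω → ℝ) (hp : ∀ ω, 0 ≤ p ω) (E : Ω → Prop) :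
    0 ≤ Pr p E := by
  apply Finset.sum_nonneg
  intro ω _
  by_cases hE : E ω <;> simp [hE, hp ω]

lemma Pr_null' {Ω : Type*} [Fintype Ω] (p : Ω → ℝ) (hp : ∀ ω, 0 ≤ p ω) {E F : Ω → Prop}
    (hEF : ∀ ω, E ω → F ω) (hF : Pr p F = 0) : Pr p E = 0 :=
  le_antisymm (hF ▸ Pr_le' p hp hEF) (Pr_nonneg' p hp E)

lemma Pr_split' {Ω : Type*} [Fintype Ω] (p : Ω → ℝ) (E F : Ω → Prop) :
    Pr p (fun ω => ¬ E ω ∧ F ω) = Pr p F - Pr p (fun ω => E ω ∧ F ω) := by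
  unfold Pr
  rw [← Finset.sum_sub_distrib]
  apply Finset.sum_congr rfl
  intro ω _
  by_cases hE : E ω <;> by_cases hF : F ω <;> simp [hE, hF]

lemma Pr_fiber' {Ω 𝓧 𝓩 : Type*} [Fintype Ω] [Fintype 𝓩] (p : Ω → ℝ)
    (Q : Ω → Prop) (C : 𝓩 → Prop) (X : Ω → 𝓧) (Z : Ω → 𝓩) (x : 𝓧) :
    Pr p (fun ω => Q ω ∧ C (Z ω) ∧ X ω = x) =
    ∑ z, if C z then Pr p (fun ω => Q ω ∧ Z ω = z ∧ X ω = x) else 0 := by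
  have step1 : (∑ z : 𝓩, if C z then Pr p (fun ω => Q ω ∧ Z ω = z ∧ X ω = x) else 0)
      = ∑ z : 𝓩, ∑ ω : Ω, if C z ∧ Q ω ∧ Z ω = z ∧ X ω = x then p ω else 0 := by
    apply Finset.sum_congr rfl
    intro z _
    by_cases hz : C z
    · rw [if_pos hz]
      unfold Pr
      apply Finset.sum_congr rfl
      intro ω _
      by_cases hq : Q ω ∧ Z ω = z ∧ X ω = x
      · rw [if_pos hq, if_pos ⟨hz, hq⟩]
      · rw [if_neg hq, if_neg (fun hc => hq hc.2)]
    · rw [if_neg hz]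
      rw [Finset.sum_eq_zero]
      intro ω _
      rw [if_neg (fun hc => hz hc.1)]
  rw [step1, Finset.sum_comm]
  unfold Pr
  apply Finset.sum_congr rfl
  intro ω _
  rw [Finset.sum_eq_single (Z ω)]
  · by_cases h1 : Q ω ∧ C (Z ω) ∧ X ω = x
    · rw [if_pos h1, if_pos ⟨h1.2.1, h1.1, rfl, h1.2.2⟩]
    · rw [if_neg h1, if_neg (fun hc => h1 ⟨hc.2.1, hc.1, hc.2.2.2⟩)]
  · intro z _ hz
    rw [if_neg (fun hc => hz (hc.2.2.1.symm))]
  · intro hz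
    exact absurd (Finset.mem_univ (Z ω)) hz


/-- If `W ⟂ Y | (Z, X)` on a finite probability space with binary `Y`,
then there is a scalar-valued function `φ` of `(X, Z)` with `W ⟂ Y | (φ(X,Z), X)`;
in particular one may take `φ x z = P(Y = 1 | X = x, Z = z)`. -/
theorem stmt0 {Ω 𝓦 𝓧 𝓩 : Type*} [Fintype Ω] [Fintype 𝓧] [Fintype 𝓩]
    (p : Ω → ℝ) (hp : ∀ ω, 0 ≤ p ω) (hsum : ∑ ω, p ω = 1)
    (W : Ω → 𝓦) (X : Ω → 𝓧) (Z : Ω → 𝓩) (Y : Ω → Fin 2)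
    (h : CondIndepOn p W Y (fun ω => (Z ω, X ω))) :
    (∃ φ : 𝓧 → 𝓩 → ℝ, CondIndepOn p W Y (fun ω => (φ (X ω) (Z ω), X ω))) ∧
      CondIndepOn p W Y
        (fun ω =>
          (condPr p (fun ω' => Y ω' = 1) (fun ω' => X ω' = X ω ∧ Z ω' = Z ω), X ω)) := by
  set e : 𝓧 → 𝓩 → ℝ :=
    fun x z => condPr p (fun ω' => Y ω' = 1) (fun ω' => X ω' = x ∧ Z ω' = z) with he
  have main : CondIndepOn p W Y (fun ω => (e (X ω) (Z ω), X ω)) := by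
    rintro a b ⟨r, x⟩
    set q : ℝ := if b = 1 then r else 1 - r with hq
    -- cell-level facts
    have cellA : ∀ z : 𝓩, e x z = r →
        Pr p (fun ω => Y ω = b ∧ Z ω = z ∧ X ω = x) =
        q * Pr p (fun ω => Z ω = z ∧ X ω = x) := by
      intro z hez
      by_cases hc : Pr p (fun ω => Z ω = z ∧ X ω = x) = 0
      · rw [hc, mul_zero]
        exact Pr_null' p hp (fun ω hω => hω.2) hc
      · have hden : Pr p (fun ω' => X ω' = x ∧ Z ω' = z) =
            Pr p (fun ω => Z ω = z ∧ X ω = x) := Pr_congr' p (fun ω => by tauto)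
        have hnum : Pr p (fun ω' => Y ω' = 1 ∧ X ω' = x ∧ Z ω' = z) =
            Pr p (fun ω => Y ω = 1 ∧ Z ω = z ∧ X ω = x) := Pr_congr' p (fun ω => by tauto)
        have hY1 : Pr p (fun ω => Y ω = 1 ∧ Z ω = z ∧ X ω = x) =
            r * Pr p (fun ω => Z ω = z ∧ X ω = x) := by
          have hez' := hez
          rw [he] at hez'
          simp only [condPr] at hez'
          rw [hnum, hden, div_eq_iff hc] at hez'
          rw [hez']
        have hb2 : b = 0 ∨ b = 1 := by omega
        rcases hb2 with hb | hb <;> subst hb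
        · -- b = 0
          have h0 : Pr p (fun ω => Y ω = (0 : Fin 2) ∧ Z ω = z ∧ X ω = x) =
              Pr p (fun ω => ¬ (Y ω = 1) ∧ Z ω = z ∧ X ω = x) :=
            Pr_congr' p (fun ω => by
              constructor
              · rintro ⟨h1, h2⟩; exact ⟨by rw [h1]; decide, h2⟩
              · rintro ⟨h1, h2⟩; exact ⟨by omega, h2⟩)
          rw [h0, Pr_split' p, hY1, hq]
          norm_num
          ring
        · -- b = 1
          rw [hq]
          norm_num
          exact hY1
    have cellB : ∀ z : 𝓩, e x z = r →
        Pr p (fun ω => (W ω = a ∧ Y ω = b) ∧ Z ω = z ∧ X ω = x) =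
        q * Pr p (fun ω => W ω = a ∧ Z ω = z ∧ X ω = x) := by
      intro z hez
      by_cases hc : Pr p (fun ω => Z ω = z ∧ X ω = x) = 0
      · rw [Pr_null' p hp (fun ω hω => hω.2) hc,
          Pr_null' p hp (fun ω (hω : W ω = a ∧ Z ω = z ∧ X ω = x) => hω.2) hc, mul_zero]
      · have hh := h a b (z, x)
        have e1 : Pr p (fun ω => W ω = a ∧ Y ω = b ∧ (Z ω, X ω) = (z, x)) =
            Pr p (fun ω => (W ω = a ∧ Y ω = b) ∧ Z ω = z ∧ X ω = x) :=
          Pr_congr' p (fun ω => by simp [Prod.ext_iff]; tauto)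
        have e2 : Pr p (fun ω => (Z ω, X ω) = (z, x)) =
            Pr p (fun ω => Z ω = z ∧ X ω = x) :=
          Pr_congr' p (fun ω => by simp [Prod.ext_iff])
        have e3 : Pr p (fun ω => W ω = a ∧ (Z ω, X ω) = (z, x)) =
            Pr p (fun ω => W ω = a ∧ Z ω = z ∧ X ω = x) :=
          Pr_congr' p (fun ω => by simp [Prod.ext_iff])
        have e4 : Pr p (fun ω => Y ω = b ∧ (Z ω, X ω) = (z, x)) =
            Pr p (fun ω => Y ω = b ∧ Z ω = z ∧ X ω = x) :=
          Pr_congr' p (fun ω => by simp [Prod.ext_iff])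
        rw [e1, e2, e3, e4, cellA z hez] at hh
        apply mul_right_cancel₀ hc
        rw [hh]; ring
    -- global events rewritten via the fiber decomposition
    have congrS : ∀ Q : Ω → Prop,
        Pr p (fun ω => Q ω ∧ (e (X ω) (Z ω), X ω) = (r, x)) =
        Pr p (fun ω => Q ω ∧ (fun z => e x z = r) (Z ω) ∧ X ω = x) := by
      intro Q
      apply Pr_congr' p
      intro ω
      simp only [Prod.mk.injEq]
      constructor
      · rintro ⟨hq', h1, h2⟩; subst h2; exact ⟨hq', h1, rfl⟩
      · rintro ⟨hq', h1, h2⟩; subst h2; exact ⟨hq', h1, rfl⟩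
    have key : ∀ (Q : Ω → Prop),
        (∀ z : 𝓩, e x z = r →
          Pr p (fun ω => (Q ω ∧ Y ω = b) ∧ Z ω = z ∧ X ω = x) =
          q * Pr p (fun ω => Q ω ∧ Z ω = z ∧ X ω = x)) →
        Pr p (fun ω => (Q ω ∧ Y ω = b) ∧ (fun z => e x z = r) (Z ω) ∧ X ω = x) =
        q * Pr p (fun ω => Q ω ∧ (fun z => e x z = r) (Z ω) ∧ X ω = x) := by
      intro Q hcell
      rw [Pr_fiber' p (fun ω => Q ω ∧ Y ω = b) (fun z => e x z = r) X Z x,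
        Pr_fiber' p Q (fun z => e x z = r) X Z x, Finset.mul_sum]
      apply Finset.sum_congr rfl
      intro z _
      by_cases hz : e x z = r
      · rw [if_pos hz, if_pos hz, hcell z hz]
      · rw [if_neg hz, if_neg hz, mul_zero]
    -- assemble
    have hWY : Pr p (fun ω => W ω = a ∧ Y ω = b ∧ (e (X ω) (Z ω), X ω) = (r, x)) =
        q * Pr p (fun ω => (W ω = a) ∧ (fun z => e x z = r) (Z ω) ∧ X ω = x) := by
      have c1 : Pr p (fun ω => W ω = a ∧ Y ω = b ∧ (e (X ω) (Z ω), X ω) = (r, x)) =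
          Pr p (fun ω => ((W ω = a) ∧ Y ω = b) ∧ (fun z => e x z = r) (Z ω) ∧ X ω = x) := by
        rw [show (fun ω => W ω = a ∧ Y ω = b ∧ (e (X ω) (Z ω), X ω) = (r, x)) =
            (fun ω => (W ω = a ∧ Y ω = b) ∧ (e (X ω) (Z ω), X ω) = (r, x)) from
          funext (fun ω => by rw [and_assoc])]
        exact congrS (fun ω => W ω = a ∧ Y ω = b)
      rw [c1]
      exact key (fun ω => W ω = a) (fun z hz => cellB z hz)
    have hY : Pr p (fun ω => Y ω = b ∧ (e (X ω) (Z ω), X ω) = (r, x)) =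
        q * Pr p (fun ω => True ∧ (fun z => e x z = r) (Z ω) ∧ X ω = x) := by
      have c1 : Pr p (fun ω => Y ω = b ∧ (e (X ω) (Z ω), X ω) = (r, x)) =
          Pr p (fun ω => (True ∧ Y ω = b) ∧ (fun z => e x z = r) (Z ω) ∧ X ω = x) := by
        rw [show (fun ω => Y ω = b ∧ (e (X ω) (Z ω), X ω) = (r, x)) =
            (fun ω => (True ∧ Y ω = b) ∧ (e (X ω) (Z ω), X ω) = (r, x)) from
          funext (fun ω => by simp)]
        exact congrS (fun ω => True ∧ Y ω = b)
      rw [c1]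
      apply key (fun _ => True)
      intro z hz
      have t1 : Pr p (fun ω => (True ∧ Y ω = b) ∧ Z ω = z ∧ X ω = x) =
          Pr p (fun ω => Y ω = b ∧ Z ω = z ∧ X ω = x) := Pr_congr' p (fun ω => by tauto)
      have t2 : Pr p (fun ω => True ∧ Z ω = z ∧ X ω = x) =
          Pr p (fun ω => Z ω = z ∧ X ω = x) := Pr_congr' p (fun ω => by tauto)
      rw [t1, t2]
      exact cellA z hz
    have hS : Pr p (fun ω => (e (X ω) (Z ω), X ω) = (r, x)) =
        Pr p (fun ω => True ∧ (fun z => e x z = r) (Z ω) ∧ X ω = x) := by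
      rw [show (fun ω => (e (X ω) (Z ω), X ω) = (r, x)) =
          (fun ω => True ∧ (e (X ω) (Z ω), X ω) = (r, x)) from
        funext (fun ω => by simp)]
      exact congrS (fun _ => True)
    have hW : Pr p (fun ω => W ω = a ∧ (e (X ω) (Z ω), X ω) = (r, x)) =
        Pr p (fun ω => (W ω = a) ∧ (fun z => e x z = r) (Z ω) ∧ X ω = x) :=
      congrS (fun ω => W ω = a)
    rw [hWY, hY, hS, hW]
    ring
  exact ⟨⟨e, main⟩, main⟩
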